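/- Let X be a compact Hausdorff zero-dimensional space. Then the unital commutative C*-algebra C(X, ℂ) is approximable by jointly non-degenerate products: for all f, g ∈ C(X) and ε > 0 there exist f', g' ∈ C(X) with ‖f − f'‖_∞ < ε, ‖g − g'‖_∞ < ε, f·g = f'·g', and |f'|² + |g'|² invertible in C(X) (i.e., bounded below by a positive constant). -/

import Mathlib

open Set

/-- Compact set inside an open set in a compact Hausdorff totally disconnected space is
contained in a clopen subset of the open set. -/
lemma exists_isClopen_between {X : Type*} [TopologicalSpace X] [CompactSpace X] [T2Space X]
    [TotallyDisconnectedSpace X] {K U : Set X} (hK : IsCompact K) (hU : IsOpen U)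
    (hKU : K ⊆ U) : ∃ V : Set X, IsClopen V ∧ K ⊆ V ∧ V ⊆ U := by
  have h : ∀ x ∈ K, ∃ V : Set X, IsClopen V ∧ x ∈ V ∧ V ⊆ U := fun x hx =>
    compact_exists_isClopen_in_isOpen hU (hKU hx)
  choose! V hVclopen hVx hVU using h
  obtain ⟨t, ht⟩ := hK.elim_finite_subcover (fun x : K => V x) (fun x => (hVclopen x x.2).2)
    (fun x hx => mem_iUnion.2 ⟨⟨x, hx⟩, hVx x hx⟩)
  refine ⟨⋃ x ∈ t, V x, ?_, ?_, ?_⟩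
  · exact isClopen_biUnion_finset fun x _ => hVclopen x x.2
  · intro x hx
    obtain ⟨i, hi⟩ := mem_iUnion.1 (ht hx)
    obtain ⟨hit, hiV⟩ := mem_iUnion.1 hi
    exact mem_biUnion hit hiV
  · exact iUnion₂_subset fun i _ => hVU i i.2

/-- For a zero-dimensional compact Hausdorff space `X`, the algebra `C(X, ℂ)` is approximable
by jointly non-degenerate products. -/
theorem stmt_10 (X : Type*) [TopologicalSpace X] [CompactSpace X] [T2Space X]
    [TotallyDisconnectedSpace X] :
    ∀ (f g : C(X, ℂ)) (ε : ℝ), 0 < ε →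
      ∃ f' g' : C(X, ℂ), ‖f - f'‖ < ε ∧ ‖g - g'‖ < ε ∧ f * g = f' * g' ∧
        ∃ η : ℝ, 0 < η ∧ ∀ x : X,
          η ≤ (‖f' x‖) ^ 2 + (‖g' x‖) ^ 2 := by
  intro f g ε hε
  set δ : ℝ := ε / 7 with hδdef
  have hδ : 0 < δ := by positivity
  -- the "small" compact set and the open neighborhood
  set φ : X → ℝ := fun x => ‖f x‖ ^ 2 + ‖g x‖ ^ 2 with hφ
  have hφc : Continuous φ := by
    exact ((continuous_norm.comp f.continuous).pow 2).add
      ((continuous_norm.comp g.continuous).pow 2)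
  set K : Set X := φ ⁻¹' Iic (δ ^ 2) with hK
  set U : Set X := φ ⁻¹' Iio (4 * δ ^ 2) with hU
  have hKc : IsCompact K := (isClosed_Iic.preimage hφc).isCompact
  have hUo : IsOpen U := isOpen_Iio.preimage hφc
  have hKU : K ⊆ U := by
    intro x hx
    have h1 : φ x ≤ δ ^ 2 := hx
    show φ x < 4 * δ ^ 2
    nlinarith
  obtain ⟨V, hVclopen, hKV, hVU⟩ := exists_isClopen_between hKc hUo hKU
  -- the characteristic function of V
  set χ : C(X, ℂ) := ⟨V.indicator 1, continuous_indicator (by simp [hVclopen]) <|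
    continuous_const.continuousOn⟩ with hχ
  have hχ_mem : ∀ x ∈ V, χ x = 1 := fun x hx => indicator_of_mem hx 1
  have hχ_nmem : ∀ x ∉ V, χ x = 0 := fun x hx => indicator_of_notMem hx 1
  have hχ_idem : χ * χ = χ := by
    ext x
    by_cases hx : x ∈ V <;> simp [hχ_mem, hχ_nmem, hx]
  -- bounds on V: |f x| < 2δ and |g x| < 2δ
  have hfV : ∀ x ∈ V, ‖f x‖ < 2 * δ := by
    intro x hx
    have h1 : ‖f x‖ ^ 2 + ‖g x‖ ^ 2 < 4 * δ ^ 2 := hVU hx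
    nlinarith [norm_nonneg (f x), norm_nonneg (g x),
      sq_nonneg (‖g x‖)]
  have hgV : ∀ x ∈ V, ‖g x‖ < 2 * δ := by
    intro x hx
    have h1 : ‖f x‖ ^ 2 + ‖g x‖ ^ 2 < 4 * δ ^ 2 := hVU hx
    nlinarith [norm_nonneg (f x), norm_nonneg (g x)]
  -- the perturbed functions
  set f' : C(X, ℂ) := f * (1 - χ) + (δ : ℂ) • χ with hf'
  set g' : C(X, ℂ) := g * (1 - χ) + ((δ : ℂ)⁻¹ • (f * g)) * χ with hg'
  have hδC : ((δ : ℂ)) ≠ 0 := by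
    simpa using hδ.ne'
  refine ⟨f', g', ?_, ?_, ?_, δ ^ 2, by positivity, ?_⟩
  · rw [ContinuousMap.norm_lt_iff _ hε]
    intro x
    by_cases hx : x ∈ V
    · have h1 : ‖f x‖ < 2 * δ := hfV x hx
      have : (f - f') x = f x - (δ : ℂ) := by
        simp [hf', hχ_mem x hx]
      rw [this]
      calc ‖f x - (δ : ℂ)‖ ≤ ‖f x‖ + ‖(δ : ℂ)‖ := norm_sub_le _ _
        _ < 2 * δ + δ := by
            have : ‖(δ : ℂ)‖ = δ := by simp [abs_of_pos hδ]
            rw [this]; exact add_lt_add_left h1 δ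
        _ < ε := by rw [hδdef]; linarith
    · have : (f - f') x = 0 := by simp [hf', hχ_nmem x hx]
      rw [this]; simpa using hε
  · rw [ContinuousMap.norm_lt_iff _ hε]
    intro x
    by_cases hx : x ∈ V
    · have h1 : ‖f x‖ < 2 * δ := hfV x hx
      have h2 : ‖g x‖ < 2 * δ := hgV x hx
      have : (g - g') x = g x - (δ : ℂ)⁻¹ * (f x * g x) := by
        simp [hg', hχ_mem x hx]
      rw [this]
      have hnn2 : (0:ℝ) ≤ ‖g x‖ := norm_nonneg _
      calc ‖g x - (δ : ℂ)⁻¹ * (f x * g x)‖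
          ≤ ‖g x‖ + ‖(δ : ℂ)⁻¹ * (f x * g x)‖ := norm_sub_le _ _
        _ = ‖g x‖ + δ⁻¹ * (‖f x‖ * ‖g x‖) := by
            simp [map_mul, abs_of_pos hδ]
        _ < 2 * δ + δ⁻¹ * (2 * δ * (2 * δ)) := by
            have hfnn : (0:ℝ) ≤ ‖f x‖ := norm_nonneg _
            have hδinv : (0:ℝ) < δ⁻¹ := inv_pos.2 hδ
            have : ‖f x‖ * ‖g x‖ < 2 * δ * (2 * δ) := by
              nlinarith
            nlinarith
        _ = 6 * δ := by field_simp; ring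
        _ < ε := by rw [hδdef]; linarith
    · have : (g - g') x = 0 := by simp [hg', hχ_nmem x hx]
      rw [this]; simpa using hε
  · -- f * g = f' * g'
    ext x
    by_cases hx : x ∈ V
    · simp [hf', hg', hχ_mem x hx]
      field_simp
    · simp [hf', hg', hχ_nmem x hx]
  · intro x
    by_cases hx : x ∈ V
    · have : f' x = (δ : ℂ) := by simp [hf', hχ_mem x hx]
      rw [this]
      have h1 : ‖(δ : ℂ)‖ = δ := by simp [abs_of_pos hδ]
      rw [h1]
      nlinarith [sq_nonneg (‖g' x‖), norm_nonneg (g' x)]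
    · have hf'x : f' x = f x := by simp [hf', hχ_nmem x hx]
      have hg'x : g' x = g x := by simp [hg', hχ_nmem x hx]
      rw [hf'x, hg'x]
      have hxK : x ∉ K := fun hxK => hx (hKV hxK)
      have h2 : δ ^ 2 < ‖f x‖ ^ 2 + ‖g x‖ ^ 2 := not_le.1 hxK
      linarith
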